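/- Let G be a connected finite simple graph on n vertices with even diameter d in which no two distinct vertices have equal neighborhoods, let P = v_1 ∼ v_2 ∼ ⋯ ∼ v_{d+1} be a diameter path of G, and suppose η(G) = n − d − 1. Then there is exactly one vertex of G outside P having exactly three neighbors on P. -/

import Mathlib

open Classical in
/-- The adjacency matrix of a finite simple graph over `ℝ`. -/
noncomputable def adjMat {V : Type} [Fintype V] (G : SimpleGraph V) : Matrix V V ℝ :=
  Matrix.of fun i j => if G.Adj i j then (1 : ℝ) else 0

/-- The nullity `η(G)` of a finite simple graph: the dimension of the kernel of
its adjacency matrix over `ℝ`. -/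
noncomputable def nullity {V : Type} [Fintype V] (G : SimpleGraph V) : ℕ :=
  Module.finrank ℝ (LinearMap.ker (adjMat G).mulVecLin)

open Finset Module

/-! ### Numeric layer -/

noncomputable section NumLayer

/-- Kernel vector of the even path. -/
def uu : ℕ → ℝ := fun m => if Even m then (-1:ℝ)^(m/2) else 0

lemma uu_zero : uu 0 = 1 := by simp [uu]
lemma uu_odd {m : ℕ} (h : ¬ Even m) : uu m = 0 := by simp [uu, h]
lemma uu_even {m : ℕ} (h : Even m) : uu m = (-1:ℝ)^(m/2) := by simp [uu, h]
lemma uu_ne_zero_iff {m : ℕ} : uu m ≠ 0 ↔ Even m := by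
  constructor
  · intro h; by_contra he; exact h (uu_odd he)
  · intro h; rw [uu_even h]; positivity

lemma uu_succ_succ (m : ℕ) : uu (m+2) = - uu m := by
  rcases Nat.even_or_odd m with h | h
  · rw [uu_even h, uu_even (by exact h.add (by decide)), show (m+2)/2 = m/2+1 by omega, pow_succ]
    ring
  · rw [uu_odd (by simpa using h.add_even (by decide)), uu_odd (by simpa using h), neg_zero]

/-- The explicit particular solution of the path linear system. -/
def xr (f : ℕ → ℝ) : ℕ → ℝ
  | 0 => 0
  | 1 => f 0
  | (m+2) => f (m+1) - xr f m

lemma xr_rec (f : ℕ → ℝ) (m : ℕ) : xr f m + xr f (m+2) = f (m+1) := by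
  rw [show xr f (m+2) = f (m+1) - xr f m from rfl]; ring

lemma xr_odd (f : ℕ → ℝ) (m : ℕ) :
    xr f (2*m+1) = ∑ k ∈ range (m+1), (-1:ℝ)^(m-k) * f (2*k) := by
  induction m with
  | zero => simp [xr]
  | succ m ih =>
    have h2 : xr f (2*(m+1)+1) = f (2*(m+1)) - xr f (2*m+1) := by
      rw [show 2*(m+1)+1 = (2*m+1)+2 by ring]; rfl
    rw [h2, ih]
    have hsgn : ∀ k ∈ range (m+1), (-1:ℝ)^(m+1-k) * f (2*k) = -((-1:ℝ)^(m-k) * f (2*k)) := by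
      intro k hk
      rw [mem_range] at hk
      rw [show m+1-k = (m-k)+1 by omega, pow_succ]
      ring
    conv_rhs => rw [sum_range_succ, sum_congr rfl hsgn]
    rw [Finset.sum_neg_distrib]
    simp
    ring

lemma xr_congr {f g : ℕ → ℝ} (h : ∀ k, f k = g k) (m : ℕ) : xr f m = xr g m := by
  have : f = g := funext h
  rw [this]

/-- x at an odd index vanishes when f is supported on odd indices. -/
lemma xr_odd_supp {f : ℕ → ℝ} (hf : ∀ k, Even k → f k = 0) (m : ℕ) :
    xr f (2*m+1) = 0 := by
  rw [xr_odd]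
  refine Finset.sum_eq_zero fun k _ => ?_
  rw [hf (2*k) (even_two_mul k), mul_zero]

/-- Key cross-term: value of the solution for a triple at even `j`, at odd index `i+1`. -/
lemma xr_triple (j i : ℕ) (hj : Even j) (hi : Even i) :
    xr (fun m => if m = j ∨ m = j+1 ∨ m = j+2 then (1:ℝ) else 0) (i+1)
      = if i = j then 1 else 0 := by
  obtain ⟨a, ha⟩ := hi
  obtain ⟨c, hc⟩ := hj
  subst ha hc
  rw [show a + a + 1 = 2*a+1 by ring, xr_odd]
  have hind : ∀ k ∈ range (a+1), (-1:ℝ)^(a-k) * (if 2*k = c+c ∨ 2*k = c+c+1 ∨ 2*k = c+c+2 then (1:ℝ) else 0)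
      = (if k = c then (-1:ℝ)^(a-k) else 0) + (if k = c+1 then (-1:ℝ)^(a-k) else 0) := by
    intro k _
    rcases eq_or_ne k c with rfl | h1
    · rw [if_pos (by omega), if_pos rfl, if_neg (by omega)]; ring
    rcases eq_or_ne k (c+1) with rfl | h2
    · rw [if_pos (by omega), if_neg h1, if_pos rfl]; ring
    · rw [if_neg (by omega), if_neg h1, if_neg h2]; ring
  rw [sum_congr rfl hind, Finset.sum_add_distrib, Finset.sum_ite_eq' (range (a+1)),
    Finset.sum_ite_eq' (range (a+1))]
  rcases lt_trichotomy a c with h | rfl | h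
  · rw [if_neg (by simp; omega), if_neg (by simp; omega), if_neg (by omega)]; ring
  · rw [if_pos (by simp), if_neg (by simp), if_pos rfl]; simp
  · rw [if_pos (by simp; omega), if_pos (by simp; omega), if_neg (by omega),
      show a - c = (a-(c+1))+1 by omega, pow_succ]
    ring

lemma sum_uu (g : ℕ → ℝ) (M : ℕ) :
    ∑ i ∈ range (2*M+1), uu i * g i = ∑ k ∈ range (M+1), (-1:ℝ)^k * g (2*k) := by
  induction M with
  | zero => simp [uu]
  | succ M ih =>
    rw [show 2*(M+1)+1 = (2*M+1)+1+1 by ring, sum_range_succ, sum_range_succ, ih,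
      uu_odd (by simp [Nat.even_add_one, parity_simps]),
      uu_even (by exact ⟨M+1, by ring⟩), show (2*M+1+1)/2 = M+1 by omega,
      show 2*M+1+1 = 2*(M+1) by ring]
    conv_rhs => rw [sum_range_succ, sum_range_succ]
    rw [sum_range_succ]
    ring

lemma xr_consistency (f : ℕ → ℝ) (M : ℕ) (hM : 1 ≤ M)
    (h : ∑ k ∈ range (M+1), (-1:ℝ)^k * f (2*k) = 0) :
    xr f (2*M-1) = f (2*M) := by
  have h1 : 2*M-1 = 2*(M-1)+1 := by omega
  rw [h1, xr_odd, show M-1+1 = M by omega]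
  rw [sum_range_succ] at h
  have hterm : ∀ k ∈ range M, (-1:ℝ)^(M-1-k) * f (2*k) = (-1:ℝ)^(M-1) * ((-1:ℝ)^k * f (2*k)) := by
    intro k hk
    rw [mem_range] at hk
    have h2 : (-1:ℝ)^(M-1-k) * (-1:ℝ)^k = (-1:ℝ)^(M-1) := by
      rw [← pow_add, show M-1-k+k = M-1 by omega]
    calc (-1:ℝ)^(M-1-k) * f (2*k) = ((-1:ℝ)^(M-1-k) * (-1:ℝ)^k) * ((-1:ℝ)^k * f (2*k)) := by
          rw [show ((-1:ℝ)^(M-1-k) * (-1:ℝ)^k) * ((-1:ℝ)^k * f (2*k))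
            = (-1:ℝ)^(M-1-k) * (((-1:ℝ)^k * (-1:ℝ)^k) * f (2*k)) by ring, ← pow_add,
            Even.neg_one_pow ⟨k, rfl⟩, one_mul]
      _ = (-1:ℝ)^(M-1) * ((-1:ℝ)^k * f (2*k)) := by rw [h2]
  rw [sum_congr rfl hterm, ← mul_sum,
    show ∑ k ∈ range M, (-1:ℝ)^k * f (2*k) = -((-1:ℝ)^M * f (2*M)) by linarith]
  have h3 : (-1:ℝ)^(M-1) * (-1:ℝ)^M = -1 := by
    rw [← pow_add, show M-1+M = 2*(M-1)+1 by omega, pow_succ, Even.neg_one_pow ⟨M-1, by ring⟩]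
    ring
  calc (-1:ℝ)^(M-1) * -((-1:ℝ)^M * f (2*M)) = -((-1:ℝ)^(M-1) * (-1:ℝ)^M) * f (2*M) := by ring
    _ = f (2*M) := by rw [h3]; ring

/-- The path-row operator. -/
def mrow (d : ℕ) (ω : ℕ → ℝ) (i : ℕ) : ℝ :=
  (if 1 ≤ i then ω (i-1) else 0) + (if i+1 ≤ d then ω (i+1) else 0)

lemma mrow_uu {d : ℕ} (hd : Even d) {i : ℕ} (hi : i ≤ d) : mrow d uu i = 0 := by
  unfold mrow
  rcases Nat.eq_zero_or_pos i with rfl | hpos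
  · simp [uu_odd (by decide : ¬ Even 1)]
  rcases Nat.lt_or_ge (i+1) (d+1) with hlt | hge
  · rw [if_pos (show 1 ≤ i by omega), if_pos (by omega), show i+1 = (i-1)+2 by omega, uu_succ_succ]; ring
  · have : i = d := by omega
    subst this
    rw [if_pos (show 1 ≤ i by omega), if_neg (by omega), uu_odd (by
      rcases hd with ⟨k, hk⟩
      subst hk
      have : k + k - 1 = 2*(k-1)+1 := by omega
      rw [this]
      simp [Nat.even_add_one, parity_simps])]
    ring

lemma pathker {d : ℕ} {ω : ℕ → ℝ} (h : ∀ i ≤ d, mrow d ω i = 0) :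
    ∀ m ≤ d, ω m = ω 0 * uu m := by
  intro m
  induction m using Nat.strong_induction_on with
  | _ m ih =>
    match m with
    | 0 => intro _; rw [uu_zero]; ring
    | 1 =>
      intro h1
      have := h 0 (by omega)
      unfold mrow at this
      rw [if_neg (by omega), if_pos (by omega)] at this
      rw [uu_odd (by decide)]
      simpa using this
    | (m+2) =>
      intro h2
      have hr := h (m+1) (by omega)
      unfold mrow at hr
      rw [if_pos (by omega), if_pos (by omega), show m+1-1 = m from rfl] at hr
      have h3 := ih m (by omega) (by omega)
      rw [uu_succ_succ]
      have : ω (m+2) = - ω m := by linarith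
      rw [this, h3]; ring

lemma xsol {d : ℕ} {f : ℕ → ℝ} (hd : Even d) (hf : ∀ m, d < m → f m = 0)
    (horth : ∑ i ∈ range (d+1), uu i * f i = 0) :
    ∀ i ≤ d, mrow d (xr f) i = f i := by
  intro i hi
  unfold mrow
  rcases Nat.eq_zero_or_pos i with rfl | hpos
  · rcases Nat.eq_zero_or_pos d with rfl | hdpos
    · rw [if_neg (by omega), if_neg (by omega)]
      have : uu 0 * f 0 = f 0 := by rw [uu_zero]; ring
      simpa [this] using horth.symm
    · rw [if_neg (by omega), if_pos (by omega)]
      simp [xr]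
  rcases Nat.lt_or_ge (i+1) (d+1) with hlt | hge
  · rw [if_pos (show 1 ≤ i by omega), if_pos (by omega), show i+1 = (i-1)+2 by omega, xr_rec,
      show i-1+1 = i by omega]
  · have hid : i = d := by omega
    subst hid
    rw [if_pos (show 1 ≤ i by omega), if_neg (by omega), add_zero]
    obtain ⟨M, hM⟩ := hd
    have hM2 : i = 2*M := by omega
    subst hM2
    have hM1 : 1 ≤ M := by omega
    rw [show 2*M-1 = 2*M-1 from rfl]
    exact xr_consistency f M hM1 (by rw [← sum_uu]; simpa [show 2*M+1 = 2*M+1 from rfl] using horth)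

lemma mrow_sum {d : ℕ} {ι : Type*} (s : Finset ι) (g : ι → ℕ → ℝ) (i : ℕ) :
    mrow d (fun m => ∑ z ∈ s, g z m) i = ∑ z ∈ s, mrow d (g z) i := by
  unfold mrow
  split_ifs <;> simp [Finset.sum_add_distrib]

lemma mrow_add {d : ℕ} (a b : ℕ → ℝ) (i : ℕ) :
    mrow d (fun m => a m + b m) i = mrow d a i + mrow d b i := by
  unfold mrow; split_ifs <;> ring

lemma mrow_smul {d : ℕ} (c : ℝ) (a : ℕ → ℝ) (i : ℕ) :
    mrow d (fun m => c * a m) i = c * mrow d a i := by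
  unfold mrow; split_ifs <;> ring

lemma shift1 {d : ℕ} (y z : ℕ → ℝ) :
    ∑ i ∈ range (d+1), y i * (if 1 ≤ i then z (i-1) else 0) = ∑ i ∈ range d, y (i+1) * z i := by
  rw [Finset.sum_range_succ']
  simp

lemma shift2 {d : ℕ} (y z : ℕ → ℝ) :
    ∑ i ∈ range (d+1), y i * (if i+1 ≤ d then z (i+1) else 0) = ∑ i ∈ range d, y i * z (i+1) := by
  rw [Finset.sum_range_succ, if_neg (by omega), mul_zero, add_zero]
  refine Finset.sum_congr rfl fun i hi => ?_
  rw [mem_range] at hi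
  rw [if_pos (by omega)]

lemma mrow_symm {d : ℕ} (a b : ℕ → ℝ) :
    ∑ i ∈ range (d+1), a i * mrow d b i = ∑ i ∈ range (d+1), b i * mrow d a i := by
  have key : ∀ f g : ℕ → ℝ, ∑ i ∈ range (d+1), f i * mrow d g i
      = ∑ i ∈ range d, (f (i+1) * g i + f i * g (i+1)) := by
    intro f g
    unfold mrow
    rw [show (∑ i ∈ range (d+1), f i * ((if 1 ≤ i then g (i-1) else 0)
        + (if i+1 ≤ d then g (i+1) else 0)))
      = (∑ i ∈ range (d+1), f i * (if 1 ≤ i then g (i-1) else 0))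
        + ∑ i ∈ range (d+1), f i * (if i+1 ≤ d then g (i+1) else 0) from by
      rw [← Finset.sum_add_distrib]; exact Finset.sum_congr rfl fun i _ => by ring]
    rw [shift1, shift2, ← Finset.sum_add_distrib]
  rw [key, key]
  exact Finset.sum_congr rfl fun i _ => by ring

lemma mrow_congr {d : ℕ} {a b : ℕ → ℝ} (h : ∀ m ≤ d, a m = b m) {i : ℕ} (hi : i ≤ d) :
    mrow d a i = mrow d b i := by
  unfold mrow
  congr 1
  · split_ifs with h1
    · rw [h (i-1) (by omega)]
    · rfl
  · split_ifs with h2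
    · rw [h (i+1) (by omega)]
    · rfl

lemma mrow_mulc {d : ℕ} (a : ℕ → ℝ) (c : ℝ) (i : ℕ) :
    mrow d (fun m => a m * c) i = mrow d a i * c := by
  unfold mrow; split_ifs <;> ring

lemma mrow_neg {d : ℕ} (a : ℕ → ℝ) (i : ℕ) :
    mrow d (fun m => -(a m)) i = -(mrow d a i) := by
  unfold mrow; split_ifs <;> ring

end NumLayer

/-! ### Geometry layer -/

section Geometry
variable {V : Type} {G : SimpleGraph V} {d : ℕ} {p : Fin (d+1) → V}

/-- Total version of the path. -/
def pn (p : Fin (d+1) → V) (m : ℕ) : V := p ⟨min m d, Nat.lt_succ_of_le (Nat.min_le_right _ _)⟩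

lemma pn_eq (i : Fin (d+1)) : pn p i = p i := by
  unfold pn; congr 1; ext; simpa using Nat.lt_succ_iff.mp i.isLt

lemma pn_mk (m : ℕ) (h : m ≤ d) : pn p m = p ⟨m, Nat.lt_succ_of_le h⟩ := by
  unfold pn; congr 1; ext; simpa using h

variable (hadj : ∀ i : Fin d, G.Adj (p i.castSucc) (p i.succ))

include hadj in
lemma pn_adj (m : ℕ) (h : m < d) : G.Adj (pn p m) (pn p (m+1)) := by
  rw [pn_mk m (by omega), pn_mk (m+1) (by omega)]
  have := hadj ⟨m, h⟩
  rwa [show (⟨m,h⟩ : Fin d).castSucc = ⟨m, by omega⟩ from rfl,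
    show (⟨m,h⟩ : Fin d).succ = ⟨m+1, by omega⟩ from rfl] at this

include hadj in
lemma pn_dist_le (hG : G.Connected) (i j : ℕ) (hij : i ≤ j) (hj : j ≤ d) :
    G.dist (pn p i) (pn p j) ≤ j - i := by
  induction j, hij using Nat.le_induction with
  | base => simp
  | succ j hij ih =>
    calc G.dist (pn p i) (pn p (j+1)) ≤ G.dist (pn p i) (pn p j) + G.dist (pn p j) (pn p (j+1)) :=
          hG.dist_triangle
    _ ≤ (j - i) + 1 := by
        gcongr
        · exact ih (by omega)
        · exact le_of_eq (SimpleGraph.dist_eq_one_iff_adj.mpr (pn_adj hadj j (by omega)))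
    _ ≤ j + 1 - i := by omega

variable (hG : G.Connected) (hdist : G.dist (p 0) (p (Fin.last d)) = G.dist (p 0) (p (Fin.last d)))

include hadj hG in
lemma pn_key (hdist' : G.dist (p 0) (p (Fin.last d)) = d)
    (i j : ℕ) (hij : i ≤ j) (hj : j ≤ d) (z : V)
    (h1 : G.Adj z (pn p i)) (h2 : G.Adj z (pn p j)) : j ≤ i + 2 := by
  have h0 : G.dist (pn p 0) (pn p d) = d := by
    rw [pn_mk 0 (by omega), pn_mk d le_rfl]
    rwa [show (⟨0, by omega⟩ : Fin (d+1)) = 0 from rfl,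
      show (⟨d, by omega⟩ : Fin (d+1)) = Fin.last d from rfl]
  have t1 : G.dist (pn p 0) (pn p d) ≤ G.dist (pn p 0) (pn p i) + G.dist (pn p i) (pn p d) :=
    hG.dist_triangle
  have t2 : G.dist (pn p i) (pn p d) ≤ G.dist (pn p i) z + G.dist z (pn p d) := hG.dist_triangle
  have t3 : G.dist z (pn p d) ≤ G.dist z (pn p j) + G.dist (pn p j) (pn p d) := hG.dist_triangle
  have d1 : G.dist (pn p 0) (pn p i) ≤ i := by
    simpa using pn_dist_le hadj hG 0 i (by omega) (by omega)
  have d2 : G.dist (pn p j) (pn p d) ≤ d - j := pn_dist_le hadj hG j d hj le_rfl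
  have e1 : G.dist (pn p i) z = 1 := SimpleGraph.dist_eq_one_iff_adj.mpr h1.symm
  have e2 : G.dist z (pn p j) = 1 := SimpleGraph.dist_eq_one_iff_adj.mpr h2
  omega

include hadj hG in
lemma pn_induced (hdist' : G.dist (p 0) (p (Fin.last d)) = d)
    (i j : ℕ) (hij : i < j) (hj : j ≤ d) (h : G.Adj (pn p i) (pn p j)) :
    j = i + 1 := by
  have h0 : G.dist (pn p 0) (pn p d) = d := by
    rw [pn_mk 0 (by omega), pn_mk d le_rfl]
    rwa [show (⟨0, by omega⟩ : Fin (d+1)) = 0 from rfl,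
      show (⟨d, by omega⟩ : Fin (d+1)) = Fin.last d from rfl]
  have t1 : G.dist (pn p 0) (pn p d) ≤ G.dist (pn p 0) (pn p i) + G.dist (pn p i) (pn p d) :=
    hG.dist_triangle
  have t2 : G.dist (pn p i) (pn p d) ≤ G.dist (pn p i) (pn p j) + G.dist (pn p j) (pn p d) :=
    hG.dist_triangle
  have d1 : G.dist (pn p 0) (pn p i) ≤ i := by
    simpa using pn_dist_le hadj hG 0 i (by omega) (by omega)
  have d2 : G.dist (pn p j) (pn p d) ≤ d - j := pn_dist_le hadj hG j d hj le_rfl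
  have e1 : G.dist (pn p i) (pn p j) = 1 := SimpleGraph.dist_eq_one_iff_adj.mpr h
  omega

include hadj hG in
lemma pn_inj (hdist' : G.dist (p 0) (p (Fin.last d)) = d)
    (i j : ℕ) (hij : i < j) (hj : j ≤ d) : pn p i ≠ pn p j := by
  intro hP
  have h0 : G.dist (pn p 0) (pn p d) = d := by
    rw [pn_mk 0 (by omega), pn_mk d le_rfl]
    rwa [show (⟨0, by omega⟩ : Fin (d+1)) = 0 from rfl,
      show (⟨d, by omega⟩ : Fin (d+1)) = Fin.last d from rfl]
  have t1 : G.dist (pn p 0) (pn p d) ≤ G.dist (pn p 0) (pn p i) + G.dist (pn p i) (pn p d) :=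
    hG.dist_triangle
  have d1 : G.dist (pn p 0) (pn p i) ≤ i := by
    simpa using pn_dist_le hadj hG 0 i (by omega) (by omega)
  have d2 : G.dist (pn p i) (pn p d) ≤ d - j := by
    rw [hP]; exact pn_dist_le hadj hG j d hj le_rfl
  omega

include hadj hG in
lemma p_inj (hdist' : G.dist (p 0) (p (Fin.last d)) = d) : Function.Injective p := by
  intro i j h
  by_contra hne
  have hv : (i:ℕ) ≠ (j:ℕ) := fun hv => hne (Fin.ext hv)
  rcases hv.lt_or_gt with hlt | hlt
  · exact pn_inj hadj hG hdist' i j hlt (by omega) (by rw [pn_eq, pn_eq]; exact h)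
  · exact pn_inj hadj hG hdist' j i hlt (by omega) (by rw [pn_eq, pn_eq]; exact h.symm)

include hadj hG in
lemma adj_pn_iff (hdist' : G.dist (p 0) (p (Fin.last d)) = d)
    (i j : ℕ) (hi : i ≤ d) (hj : j ≤ d) :
    G.Adj (pn p i) (pn p j) ↔ (j = i+1 ∨ i = j+1) := by
  constructor
  · intro h
    rcases lt_trichotomy i j with hlt | rfl | hlt
    · exact Or.inl (pn_induced hadj hG hdist' i j hlt hj h)
    · exact absurd h (G.irrefl)
    · exact Or.inr (pn_induced hadj hG hdist' j i hlt hi h.symm)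
  · rintro (rfl | rfl)
    · exact pn_adj hadj i (by omega)
    · exact (pn_adj hadj j (by omega)).symm

end Geometry

/-! ### Matrix layer -/

lemma mrow_eval {d : ℕ} (ω : ℕ → ℝ) (i : ℕ) (hi : i ≤ d) :
    ∑ j ∈ range (d+1), (if (j = i+1 ∨ i = j+1) then (1:ℝ) else 0) * ω j = mrow d ω i := by
  have hsplit : ∀ j ∈ range (d+1), (if (j = i+1 ∨ i = j+1) then (1:ℝ) else 0) * ω j
      = (if j = i+1 then ω j else 0) + (if 1 ≤ i ∧ j = i-1 then ω j else 0) := by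
    intro j _
    by_cases h1 : j = i+1
    · rw [if_pos (Or.inl h1), if_pos h1, if_neg (by omega)]; ring
    by_cases h2 : i = j+1
    · rw [if_pos (Or.inr h2), if_neg h1, if_pos (by omega)]; ring
    · rw [if_neg (by tauto), if_neg h1, if_neg (by omega)]; ring
  rw [sum_congr rfl hsplit, Finset.sum_add_distrib, Finset.sum_ite_eq' (range (d+1))]
  unfold mrow
  by_cases h1 : 1 ≤ i
  · have hcong : ∀ j ∈ range (d+1), (if 1 ≤ i ∧ j = i-1 then ω j else 0)
        = (if j = i-1 then ω j else 0) := by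
      intro j _; by_cases h : j = i-1
      · rw [if_pos ⟨h1, h⟩, if_pos h]
      · rw [if_neg (by tauto), if_neg h]
    rw [sum_congr rfl hcong, Finset.sum_ite_eq' (range (d+1)),
      if_pos (show (i-1) ∈ range (d+1) by rw [mem_range]; omega), if_pos h1]
    by_cases h2 : i + 1 ≤ d
    · rw [if_pos (show (i+1) ∈ range (d+1) by rw [mem_range]; omega), if_pos h2]; ring
    · rw [if_neg (show (i+1) ∉ range (d+1) by rw [mem_range]; omega), if_neg h2]; ring
  · have hcong : ∀ j ∈ range (d+1), (if 1 ≤ i ∧ j = i-1 then ω j else 0) = 0 := by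
      intro j _; rw [if_neg (by tauto)]
    rw [sum_congr rfl hcong, Finset.sum_const_zero, if_neg h1]
    by_cases h2 : i + 1 ≤ d
    · rw [if_pos (show (i+1) ∈ range (d+1) by rw [mem_range]; omega), if_pos h2]
      ring
    · rw [if_neg (show (i+1) ∉ range (d+1) by rw [mem_range]; omega), if_neg h2]

section Main
open scoped Classical

variable {V : Type} [Fintype V] {G : SimpleGraph V} [DecidableRel G.Adj] {d : ℕ}
  {p : Fin (d+1) → V}

/-- indicator vector of neighbours on the path. -/
def bzf (G : SimpleGraph V) [DecidableRel G.Adj] (p : Fin (d+1) → V) (z : V) : ℕ → ℝ :=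
  fun m => if m ≤ d ∧ G.Adj z (pn p m) then 1 else 0

/-- particular solution for the path system with RHS `bzf`. -/
noncomputable def xzf (G : SimpleGraph V) [DecidableRel G.Adj] (p : Fin (d+1) → V) (z : V) :
    ℕ → ℝ := xr (bzf G p z)

/-- The Schur-complement-like matrix on off-path vertices. -/
noncomputable def SMat (G : SimpleGraph V) [DecidableRel G.Adj] (p : Fin (d+1) → V) :
    Matrix {v : V // v ∉ Set.range p} {v : V // v ∉ Set.range p} ℝ :=
  Matrix.of fun z w => (if G.Adj z.1 w.1 then 1 else 0)
    - ∑ i ∈ range (d+1), bzf G p z.1 i * xzf G p w.1 i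

/-- The decomposition of the vertex set. -/
noncomputable def eqv (p : Fin (d+1) → V) (hinj : Function.Injective p) :
    (Fin (d+1) ⊕ {v : V // v ∉ Set.range p}) ≃ V :=
  Equiv.ofBijective (Sum.elim p Subtype.val) (by
    constructor
    · rintro (i | z) (j | w) h
      · rw [hinj h]
      · exact absurd ⟨i, h⟩ w.2
      · exact absurd ⟨j, h.symm⟩ z.2
      · rw [Subtype.ext h]
    · intro v
      by_cases h : v ∈ Set.range p
      · obtain ⟨i, hi⟩ := h
        exact ⟨Sum.inl i, hi⟩
      · exact ⟨Sum.inr ⟨v, h⟩, rfl⟩)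

lemma eqv_inl (hinj : Function.Injective p) (i : Fin (d+1)) : eqv p hinj (Sum.inl i) = p i := rfl

lemma eqv_inr (hinj : Function.Injective p) (z : {v : V // v ∉ Set.range p}) :
    eqv p hinj (Sum.inr z) = z.1 := rfl

lemma sum_split (hinj : Function.Injective p) (f : V → ℝ) :
    ∑ v, f v = (∑ i ∈ range (d+1), f (pn p i)) + ∑ z : {v : V // v ∉ Set.range p}, f z.1 := by
  rw [← Equiv.sum_comp (eqv p hinj) f, Fintype.sum_sum_type]
  congr 1
  calc ∑ i : Fin (d+1), f (eqv p hinj (Sum.inl i)) = ∑ i : Fin (d+1), f (pn p ↑i) :=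
        Finset.sum_congr rfl (fun i _ => by rw [eqv_inl, pn_eq])
    _ = ∑ i ∈ range (d+1), f (pn p i) := Fin.sum_univ_eq_sum_range (fun m => f (pn p m)) (d+1)

lemma card_split (hinj : Function.Injective p) :
    Fintype.card V = (d+1) + Fintype.card {v : V // v ∉ Set.range p} := by
  rw [← Fintype.card_congr (eqv p hinj), Fintype.card_sum, Fintype.card_fin]

lemma adjMat_apply (v w : V) : adjMat G v w = if G.Adj v w then 1 else 0 := by
  by_cases h : G.Adj v w <;> simp [adjMat, h]

lemma mulVec_apply (y : V → ℝ) (v : V) :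
    ((adjMat G).mulVec y) v = ∑ w, (if G.Adj v w then 1 else 0) * y w := by
  rw [Matrix.mulVec, dotProduct]
  exact Finset.sum_congr rfl fun w _ => by rw [adjMat_apply]

variable (hG : G.Connected) (hadj : ∀ i : Fin d, G.Adj (p i.castSucc) (p i.succ))
  (hdist' : G.dist (p 0) (p (Fin.last d)) = d)

include hG hadj hdist' in
lemma rowP (y : V → ℝ) (i : ℕ) (hi : i ≤ d) :
    ((adjMat G).mulVec y) (pn p i)
      = mrow d (fun m => y (pn p m)) i + ∑ z : {v : V // v ∉ Set.range p}, bzf G p z.1 i * y z.1 := by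
  rw [mulVec_apply, sum_split (p_inj hadj hG hdist')]
  congr 1
  · rw [← mrow_eval (fun m => y (pn p m)) i hi]
    refine Finset.sum_congr rfl fun j hj => ?_
    rw [mem_range] at hj
    by_cases h : G.Adj (pn p i) (pn p j)
    · rw [if_pos h, if_pos ((adj_pn_iff hadj hG hdist' i j hi (by omega)).mp h)]
    · rw [if_neg h, if_neg (fun hc => h ((adj_pn_iff hadj hG hdist' i j hi (by omega)).mpr hc))]
  · refine Finset.sum_congr rfl fun z _ => ?_
    have : (if G.Adj (pn p i) z.1 then (1:ℝ) else 0) = bzf G p z.1 i := by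
      unfold bzf
      by_cases h : G.Adj (pn p i) z.1
      · rw [if_pos h, if_pos ⟨hi, h.symm⟩]
      · rw [if_neg h, if_neg (fun hc => h hc.2.symm)]
    rw [this]

include hG hadj hdist' in
lemma rowQ (y : V → ℝ) (z : {v : V // v ∉ Set.range p}) :
    ((adjMat G).mulVec y) z.1
      = (∑ j ∈ range (d+1), bzf G p z.1 j * y (pn p j))
        + ∑ w : {v : V // v ∉ Set.range p}, (if G.Adj z.1 w.1 then 1 else 0) * y w.1 := by
  rw [mulVec_apply, sum_split (p_inj hadj hG hdist')]
  congr 1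
  refine Finset.sum_congr rfl fun j hj => ?_
  rw [mem_range] at hj
  have : (if G.Adj z.1 (pn p j) then (1:ℝ) else 0) = bzf G p z.1 j := by
    unfold bzf
    by_cases h : G.Adj z.1 (pn p j)
    · rw [if_pos h, if_pos ⟨by omega, h⟩]
    · rw [if_neg h, if_neg (fun hc => h hc.2)]
  rw [this]

/-- Kernel vector of the path extended by zero. -/
noncomputable def uuV (p : Fin (d+1) → V) (hinj : Function.Injective p) : V → ℝ :=
  Sum.elim (fun i : Fin (d+1) => uu i) (fun _ => 0) ∘ (eqv p hinj).symm

lemma uuV_p (hinj : Function.Injective p) (i : ℕ) (hi : i ≤ d) :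
    uuV p hinj (pn p i) = uu i := by
  unfold uuV
  rw [pn_mk i hi, Function.comp_apply,
    show (eqv p hinj).symm (p ⟨i, Nat.lt_succ_of_le hi⟩) = Sum.inl ⟨i, Nat.lt_succ_of_le hi⟩ from
      (Equiv.symm_apply_eq _).mpr rfl]
  rfl

lemma uuV_q (hinj : Function.Injective p) (z : {v : V // v ∉ Set.range p}) :
    uuV p hinj z.1 = 0 := by
  unfold uuV
  rw [Function.comp_apply,
    show (eqv p hinj).symm z.1 = Sum.inr z from (Equiv.symm_apply_eq _).mpr rfl]
  rfl

/-- Restriction of the kernel to off-path coordinates. -/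
noncomputable def PsiMap (G : SimpleGraph V) [DecidableRel G.Adj] (p : Fin (d+1) → V) :
    (LinearMap.ker (adjMat G).mulVecLin) →ₗ[ℝ] ({v : V // v ∉ Set.range p} → ℝ) :=
  (LinearMap.funLeft ℝ ℝ (Subtype.val : {v : V // v ∉ Set.range p} → V)).comp
    (LinearMap.ker (adjMat G).mulVecLin).subtype

lemma PsiMap_apply (w : LinearMap.ker (adjMat G).mulVecLin) (z : {v : V // v ∉ Set.range p}) :
    PsiMap G p w z = w.1 z.1 := rfl

lemma mem_ker_iff (w : V → ℝ) :
    w ∈ LinearMap.ker (adjMat G).mulVecLin ↔ (adjMat G).mulVec w = 0 := by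
  rw [LinearMap.mem_ker, Matrix.mulVecLin_apply]

include hG hadj hdist' in
lemma ker_offpath (w : V → ℝ) (hAw : (adjMat G).mulVec w = 0)
    (hQ0 : ∀ z : {v : V // v ∉ Set.range p}, w z.1 = 0) :
    ∀ m ≤ d, w (pn p m) = w (pn p 0) * uu m := by
  refine pathker (fun i hi => ?_)
  have h := rowP hG hadj hdist' w i hi
  rw [congrFun hAw (pn p i), Finset.sum_eq_zero (fun z _ => by rw [hQ0 z, mul_zero])] at h
  simpa using h.symm

/-- The linear functional given by coefficients `c`. -/
noncomputable def ellQ {Q : Type} [Fintype Q] (c : Q → ℝ) : (Q → ℝ) →ₗ[ℝ] ℝ where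
  toFun := fun y => ∑ z, c z * y z
  map_add' := fun a b => by
    simp only [Pi.add_apply, mul_add]
    rw [Finset.sum_add_distrib]
  map_smul' := fun r a => by
    simp only [Pi.smul_apply, smul_eq_mul, RingHom.id_apply, Finset.mul_sum]
    exact Finset.sum_congr rfl fun z _ => by ring

lemma ellQ_apply {Q : Type} [Fintype Q] (c y : Q → ℝ) : ellQ c y = ∑ z, c z * y z := rfl

lemma ellQ_single {Q : Type} [Fintype Q] (c : Q → ℝ) (z0 : Q) :
    ellQ c (Pi.single z0 1) = c z0 := by
  rw [ellQ_apply, Finset.sum_eq_single z0]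
  · rw [Pi.single_eq_same, mul_one]
  · intro b _ hb; rw [Pi.single_eq_of_ne hb, mul_zero]
  · intro hz; exact absurd (Finset.mem_univ z0) hz

lemma ellQ_ker_finrank {Q : Type} [Fintype Q] (c : Q → ℝ) (z0 : Q) (hz0 : c z0 ≠ 0) :
    1 + finrank ℝ (LinearMap.ker (ellQ c)) = Fintype.card Q := by
  have hsurj : Function.Surjective (ellQ c) := by
    intro r
    refine ⟨(r / c z0) • (Pi.single z0 1 : Q → ℝ), ?_⟩
    rw [map_smul, ellQ_single, smul_eq_mul, div_mul_cancel₀ _ hz0]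
  have hrk := LinearMap.finrank_range_add_finrank_ker (ellQ c)
  rwa [LinearMap.range_eq_top.mpr hsurj, finrank_top, Module.finrank_self,
    Module.finrank_pi] at hrk

include hG hadj hdist' in
lemma bad_lemma (hd : Even d)
    (hq : finrank ℝ (LinearMap.ker (adjMat G).mulVecLin)
      = Fintype.card {v : V // v ∉ Set.range p}) :
    ∀ z : {v : V // v ∉ Set.range p}, ∑ i ∈ range (d+1), uu i * bzf G p z.1 i = 0 := by
  by_contra hcon
  push_neg at hcon
  obtain ⟨z0, hz0⟩ := hcon
  have hinj : Function.Injective p := p_inj hadj hG hdist'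
  have hrk := ellQ_ker_finrank (fun z : {v : V // v ∉ Set.range p} =>
    ∑ i ∈ range (d+1), uu i * bzf G p z.1 i) z0 hz0
  -- injectivity of Ψ
  have hinjΨ : Function.Injective (PsiMap G p) := by
    refine (injective_iff_map_eq_zero _).mpr fun w hw0 => ?_
    have hAw : (adjMat G).mulVec w.1 = 0 := (mem_ker_iff w.1).mp w.2
    have hQ0 : ∀ z : {v : V // v ∉ Set.range p}, w.1 z.1 = 0 := fun z => by
      have h1 := congrFun hw0 z
      rw [PsiMap_apply] at h1
      simpa using h1
    have hker := ker_offpath hG hadj hdist' w.1 hAw hQ0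
    have h0 := rowQ hG hadj hdist' w.1 z0
    rw [congrFun hAw z0.1,
      Finset.sum_eq_zero (fun w' (_ : w' ∈ Finset.univ) => by rw [hQ0 w', mul_zero])] at h0
    have hfirst : ∑ j ∈ range (d+1), bzf G p z0.1 j * w.1 (pn p j)
        = w.1 (pn p 0) * ∑ i ∈ range (d+1), uu i * bzf G p z0.1 i := by
      rw [Finset.mul_sum]
      refine Finset.sum_congr rfl fun j hj => ?_
      rw [mem_range] at hj
      rw [hker j (by omega)]
      ring
    rw [hfirst] at h0
    simp only [Pi.zero_apply, add_zero] at h0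
    have hw00 : w.1 (pn p 0) = 0 := by
      rcases mul_eq_zero.mp h0.symm with h | h
      · exact h
      · exact absurd h hz0
    apply Subtype.ext
    funext v
    obtain ⟨s, rfl⟩ := (eqv p hinj).surjective v
    rcases s with i | z
    · rw [eqv_inl, show p i = pn p (i:ℕ) from (pn_eq i).symm]
      simp only [ZeroMemClass.coe_zero, Pi.zero_apply]
      rw [hker i (by omega), hw00]
      ring
    · rw [eqv_inr]
      simp only [ZeroMemClass.coe_zero, Pi.zero_apply]
      exact hQ0 z
  -- range Ψ ⊆ ker ℓ
  have hle : ∀ w : LinearMap.ker (adjMat G).mulVecLin,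
      ellQ (fun z : {v : V // v ∉ Set.range p} =>
        ∑ i ∈ range (d+1), uu i * bzf G p z.1 i) (PsiMap G p w) = 0 := by
    intro w
    have hAw : (adjMat G).mulVec w.1 = 0 := (mem_ker_iff w.1).mp w.2
    have h0 : ∑ i ∈ range (d+1), uu i * ((adjMat G).mulVec w.1) (pn p i) = 0 :=
      Finset.sum_eq_zero fun i _ => by rw [congrFun hAw (pn p i), Pi.zero_apply, mul_zero]
    have hexp : ∀ i ∈ range (d+1), uu i * ((adjMat G).mulVec w.1) (pn p i)
        = uu i * mrow d (fun m => w.1 (pn p m)) i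
          + ∑ z : {v : V // v ∉ Set.range p}, (uu i * bzf G p z.1 i) * w.1 z.1 := by
      intro i hi
      rw [mem_range] at hi
      rw [rowP hG hadj hdist' w.1 i (by omega), mul_add, Finset.mul_sum]
      congr 1
      exact Finset.sum_congr rfl fun z _ => by ring
    rw [Finset.sum_congr rfl hexp, Finset.sum_add_distrib] at h0
    have hfirst : ∑ i ∈ range (d+1), uu i * mrow d (fun m => w.1 (pn p m)) i = 0 := by
      rw [mrow_symm]
      exact Finset.sum_eq_zero fun i hi => by
        rw [mem_range] at hi
        rw [mrow_uu hd (by omega), mul_zero]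
    rw [hfirst, zero_add, Finset.sum_comm] at h0
    rw [ellQ_apply, ← h0]
    refine Finset.sum_congr rfl fun z _ => ?_
    rw [PsiMap_apply, Finset.sum_mul]
  -- put it together
  have hle2 : finrank ℝ (LinearMap.ker (adjMat G).mulVecLin)
      ≤ finrank ℝ (LinearMap.ker (ellQ (fun z : {v : V // v ∉ Set.range p} =>
        ∑ i ∈ range (d+1), uu i * bzf G p z.1 i))) := by
    have hinj' : Function.Injective
        ((PsiMap G p).codRestrict (LinearMap.ker _) (fun w => LinearMap.mem_ker.mpr (hle w))) := by
      intro a b hab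
      exact hinjΨ (congrArg Subtype.val hab)
    exact LinearMap.finrank_le_finrank_of_injective hinj'
  have hq1 : 1 ≤ Fintype.card {v : V // v ∉ Set.range p} := Fintype.card_pos_iff.mpr ⟨z0⟩
  omega

lemma bzf_high (z : V) {m : ℕ} (hm : d < m) : bzf G p z m = 0 := by
  unfold bzf
  rw [if_neg (fun hc => by omega)]

lemma xsol_z (hd : Even d) (z : V) (horth : ∑ i ∈ range (d+1), uu i * bzf G p z i = 0) :
    ∀ i ≤ d, mrow d (xzf G p z) i = bzf G p z i :=
  xsol hd (fun m hm => bzf_high z hm) horth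

lemma SMat_apply (z w : {v : V // v ∉ Set.range p}) :
    SMat G p z w = (if G.Adj z.1 w.1 then 1 else 0)
      - ∑ i ∈ range (d+1), bzf G p z.1 i * xzf G p w.1 i := rfl

lemma SMat_mulVec (y : {v : V // v ∉ Set.range p} → ℝ) (z : {v : V // v ∉ Set.range p}) :
    ((SMat G p).mulVec y) z = ∑ w, ((if G.Adj z.1 w.1 then 1 else 0)
      - ∑ i ∈ range (d+1), bzf G p z.1 i * xzf G p w.1 i) * y w := by
  rw [Matrix.mulVec, dotProduct]
  exact Finset.sum_congr rfl fun w _ => by rw [SMat_apply]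

include hG hadj hdist' in
lemma uuV_mem (hd : Even d)
    (hbad : ∀ z : {v : V // v ∉ Set.range p}, ∑ i ∈ range (d+1), uu i * bzf G p z.1 i = 0) :
    uuV p (p_inj hadj hG hdist') ∈ LinearMap.ker (adjMat G).mulVecLin := by
  have hinj : Function.Injective p := p_inj hadj hG hdist'
  rw [mem_ker_iff]
  funext v
  obtain ⟨s, rfl⟩ := (eqv p hinj).surjective v
  rcases s with i | z
  · rw [eqv_inl, show p i = pn p (i:ℕ) from (pn_eq i).symm, Pi.zero_apply,
      rowP hG hadj hdist' _ i (by omega)]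
    have h1 : mrow d (fun m => uuV p hinj (pn p m)) i = 0 := by
      rw [mrow_congr (fun m hm => uuV_p hinj m hm) (show (i:ℕ) ≤ d by omega)]
      exact mrow_uu hd (by omega)
    rw [h1, Finset.sum_eq_zero (fun z _ => by rw [uuV_q hinj z, mul_zero])]
    ring
  · rw [eqv_inr, Pi.zero_apply, rowQ hG hadj hdist' _ z]
    have h1 : ∑ j ∈ range (d+1), bzf G p z.1 j * uuV p hinj (pn p j) = 0 := by
      rw [show ∑ j ∈ range (d+1), bzf G p z.1 j * uuV p hinj (pn p j)
          = ∑ j ∈ range (d+1), uu j * bzf G p z.1 j from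
        Finset.sum_congr rfl fun j hj => by
          rw [mem_range] at hj
          rw [uuV_p hinj j (by omega)]
          ring]
      exact hbad z
    rw [h1, Finset.sum_eq_zero (fun w _ => by rw [uuV_q hinj w, mul_zero])]
    ring

include hG hadj hdist' in
lemma rankS_one (hd : Even d)
    (hq : finrank ℝ (LinearMap.ker (adjMat G).mulVecLin)
      = Fintype.card {v : V // v ∉ Set.range p}) :
    finrank ℝ (LinearMap.range (SMat G p).mulVecLin) = 1 := by
  have hinj : Function.Injective p := p_inj hadj hG hdist'
  have hbad := bad_lemma hG hadj hdist' hd hq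
  -- the special kernel element
  set U : LinearMap.ker (adjMat G).mulVecLin := ⟨uuV p hinj, uuV_mem hG hadj hdist' hd hbad⟩
    with hU
  have hU0 : U ≠ 0 := by
    intro h
    have h1 := congrFun (congrArg Subtype.val h) (pn p 0)
    rw [hU] at h1
    simp only [ZeroMemClass.coe_zero, Pi.zero_apply] at h1
    rw [uuV_p hinj 0 (by omega), uu_zero] at h1
    exact one_ne_zero h1
  -- kernel of Psi is spanned by U
  have hkerPsi : LinearMap.ker (PsiMap G p) = Submodule.span ℝ {U} := by
    apply le_antisymm
    · intro w hw
      rw [Submodule.mem_span_singleton]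
      have hQ0 : ∀ z : {v : V // v ∉ Set.range p}, w.1 z.1 = 0 := fun z => by
        have h1 := congrFun (LinearMap.mem_ker.mp hw) z
        rw [PsiMap_apply] at h1
        simpa using h1
      have hker := ker_offpath hG hadj hdist' w.1 ((mem_ker_iff w.1).mp w.2) hQ0
      refine ⟨w.1 (pn p 0), ?_⟩
      apply Subtype.ext
      funext v
      obtain ⟨s, rfl⟩ := (eqv p hinj).surjective v
      rcases s with i | z
      · rw [eqv_inl, show p i = pn p (i:ℕ) from (pn_eq i).symm]
        rw [show ((w.1 (pn p 0) • U : LinearMap.ker (adjMat G).mulVecLin) :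
          V → ℝ) (pn p (i:ℕ)) = w.1 (pn p 0) * uuV p hinj (pn p (i:ℕ)) from rfl]
        rw [uuV_p hinj i (by omega), hker i (by omega)]
      · rw [eqv_inr]
        rw [show ((w.1 (pn p 0) • U : LinearMap.ker (adjMat G).mulVecLin) :
          V → ℝ) z.1 = w.1 (pn p 0) * uuV p hinj z.1 from rfl]
        rw [uuV_q hinj z, hQ0 z]
        ring
    · rw [Submodule.span_le, Set.singleton_subset_iff]
      rw [SetLike.mem_coe, LinearMap.mem_ker]
      funext z
      rw [PsiMap_apply]
      exact uuV_q hinj z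
  have hdimker : finrank ℝ (LinearMap.ker (PsiMap G p)) = 1 := by
    rw [hkerPsi]
    exact finrank_span_singleton hU0
  -- range of Psi is kernel of S
  have hrangePsi : LinearMap.range (PsiMap G p) = LinearMap.ker (SMat G p).mulVecLin := by
    apply le_antisymm
    · rintro y ⟨w0, rfl⟩
      rw [LinearMap.mem_ker, Matrix.mulVecLin_apply]
      have hAw : (adjMat G).mulVec w0.1 = 0 := (mem_ker_iff w0.1).mp w0.2
      funext z
      rw [SMat_mulVec, Pi.zero_apply]
      set y : {v : V // v ∉ Set.range p} → ℝ := PsiMap G p w0 with hy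
      have hyz : ∀ z', y z' = w0.1 z'.1 := fun z' => rfl
      set ω : ℕ → ℝ := fun m => w0.1 (pn p m) with hω
      set t : ℕ → ℝ := fun m => ω m + ∑ w' : {v : V // v ∉ Set.range p}, xzf G p w'.1 m * y w'
        with ht
      have hrowt : ∀ i ≤ d, mrow d t i = 0 := by
        intro i hi
        rw [ht]
        rw [mrow_add, mrow_sum]
        have h1 : ∀ w' : {v : V // v ∉ Set.range p},
            mrow d (fun m => xzf G p w'.1 m * y w') i = bzf G p w'.1 i * y w' := by
          intro w'
          rw [mrow_mulc, xsol_z hd w'.1 (hbad w') i hi]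
        rw [Finset.sum_congr rfl (fun w' _ => h1 w')]
        have h2 := rowP hG hadj hdist' w0.1 i hi
        rw [congrFun hAw (pn p i), Pi.zero_apply] at h2
        have h3 : mrow d ω i = - ∑ z' : {v : V // v ∉ Set.range p}, bzf G p z'.1 i * w0.1 z'.1 := by
          rw [hω]; linarith [h2.symm]
        rw [h3]
        rw [show ∑ w' : {v : V // v ∉ Set.range p}, bzf G p w'.1 i * y w'
          = ∑ w' : {v : V // v ∉ Set.range p}, bzf G p w'.1 i * w0.1 w'.1 from
          Finset.sum_congr rfl fun w' _ => by rw [hyz]]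
        ring
      have hpk := pathker hrowt
      have htsub : ∀ i, t i - ω i = ∑ w' : {v : V // v ∉ Set.range p}, xzf G p w'.1 i * y w' := by
        intro i
        simp only [ht]
        ring
      -- now the computation
      have hswap : ∑ w, (∑ i ∈ range (d+1), bzf G p z.1 i * xzf G p w.1 i) * y w
          = ∑ i ∈ range (d+1), bzf G p z.1 i * (t i - ω i) := by
        calc ∑ w, (∑ i ∈ range (d+1), bzf G p z.1 i * xzf G p w.1 i) * y w
            = ∑ w, ∑ i ∈ range (d+1), bzf G p z.1 i * (xzf G p w.1 i * y w) := by
              refine Finset.sum_congr rfl fun w _ => ?_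
              rw [Finset.sum_mul]
              exact Finset.sum_congr rfl fun i _ => by ring
          _ = ∑ i ∈ range (d+1), ∑ w, bzf G p z.1 i * (xzf G p w.1 i * y w) := Finset.sum_comm
          _ = ∑ i ∈ range (d+1), bzf G p z.1 i * (t i - ω i) := by
              refine Finset.sum_congr rfl fun i _ => ?_
              rw [← Finset.mul_sum, htsub i]
      have hterm2 : ∑ i ∈ range (d+1), bzf G p z.1 i * t i = 0 := by
        calc ∑ i ∈ range (d+1), bzf G p z.1 i * t i
            = t 0 * ∑ i ∈ range (d+1), uu i * bzf G p z.1 i := by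
              rw [Finset.mul_sum]
              refine Finset.sum_congr rfl fun i hi => ?_
              rw [mem_range] at hi
              rw [hpk i (by omega)]
              ring
          _ = 0 := by rw [hbad z, mul_zero]
      have hrowQz := rowQ hG hadj hdist' w0.1 z
      rw [congrFun hAw z.1, Pi.zero_apply] at hrowQz
      have hconv : ∑ j ∈ range (d+1), bzf G p z.1 j * w0.1 (pn p j)
          = ∑ j ∈ range (d+1), bzf G p z.1 j * ω j := rfl
      rw [hconv] at hrowQz
      have hCy : ∑ w : {v : V // v ∉ Set.range p}, (if G.Adj z.1 w.1 then (1:ℝ) else 0) * y w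
          = ∑ w : {v : V // v ∉ Set.range p}, (if G.Adj z.1 w.1 then (1:ℝ) else 0) * w0.1 w.1 :=
        Finset.sum_congr rfl fun w _ => by rw [hyz]
      have hsplit : ∑ w : {v : V // v ∉ Set.range p}, ((if G.Adj z.1 w.1 then (1:ℝ) else 0)
            - ∑ i ∈ range (d+1), bzf G p z.1 i * xzf G p w.1 i) * y w
          = ∑ w : {v : V // v ∉ Set.range p}, (if G.Adj z.1 w.1 then (1:ℝ) else 0) * y w
            - ∑ w : {v : V // v ∉ Set.range p},
                (∑ i ∈ range (d+1), bzf G p z.1 i * xzf G p w.1 i) * y w := by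
        rw [← Finset.sum_sub_distrib]
        exact Finset.sum_congr rfl fun w _ => by ring
      rw [hsplit, hswap, hCy]
      have hsub : ∑ i ∈ range (d+1), bzf G p z.1 i * (t i - ω i)
          = ∑ i ∈ range (d+1), bzf G p z.1 i * t i
            - ∑ i ∈ range (d+1), bzf G p z.1 i * ω i := by
        rw [← Finset.sum_sub_distrib]
        exact Finset.sum_congr rfl fun i _ => by ring
      rw [hsub, hterm2]
      linarith [hrowQz.symm]
    · intro y hy
      have hy' : (SMat G p).mulVec y = 0 := by
        rwa [LinearMap.mem_ker, Matrix.mulVecLin_apply] at hy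
      set wf : V → ℝ := fun v => Sum.elim
        (fun i : Fin (d+1) => -(∑ z' : {v : V // v ∉ Set.range p}, xzf G p z'.1 (i:ℕ) * y z'))
        (fun z' => y z') ((eqv p hinj).symm v) with hwf
      have hwfp : ∀ m ≤ d, wf (pn p m)
          = -(∑ z' : {v : V // v ∉ Set.range p}, xzf G p z'.1 m * y z') := by
        intro m hm
        rw [hwf]
        simp only
        rw [pn_mk m hm, show (eqv p hinj).symm (p ⟨m, Nat.lt_succ_of_le hm⟩)
          = Sum.inl ⟨m, Nat.lt_succ_of_le hm⟩ from (Equiv.symm_apply_eq _).mpr rfl]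
        rfl
      have hwfq : ∀ z' : {v : V // v ∉ Set.range p}, wf z'.1 = y z' := by
        intro z'
        rw [hwf]
        simp only
        rw [show (eqv p hinj).symm z'.1 = Sum.inr z' from (Equiv.symm_apply_eq _).mpr rfl]
        rfl
      have hmem : wf ∈ LinearMap.ker (adjMat G).mulVecLin := by
        rw [mem_ker_iff]
        funext v
        obtain ⟨s, rfl⟩ := (eqv p hinj).surjective v
        rcases s with i | z'
        · rw [eqv_inl, show p i = pn p (i:ℕ) from (pn_eq i).symm, Pi.zero_apply,
            rowP hG hadj hdist' wf i (by omega)]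
          have h1 : mrow d (fun m => wf (pn p m)) i
              = - ∑ z' : {v : V // v ∉ Set.range p}, bzf G p z'.1 i * y z' := by
            rw [mrow_congr (fun m hm => hwfp m hm) (show (i:ℕ) ≤ d by omega), mrow_neg, mrow_sum]
            congr 1
            refine Finset.sum_congr rfl fun z' _ => ?_
            rw [mrow_mulc, xsol_z hd z'.1 (hbad z') i (by omega)]
          rw [h1]
          have : ∑ z' : {v : V // v ∉ Set.range p}, bzf G p z'.1 i * wf z'.1
              = ∑ z' : {v : V // v ∉ Set.range p}, bzf G p z'.1 i * y z' :=
            Finset.sum_congr rfl fun z' _ => by rw [hwfq]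
          rw [this]
          ring
        · rw [eqv_inr, Pi.zero_apply, rowQ hG hadj hdist' wf z']
          have h1 : ∑ j ∈ range (d+1), bzf G p z'.1 j * wf (pn p j)
              = - ∑ w : {v : V // v ∉ Set.range p},
                  (∑ j ∈ range (d+1), bzf G p z'.1 j * xzf G p w.1 j) * y w := by
            calc ∑ j ∈ range (d+1), bzf G p z'.1 j * wf (pn p j)
                = ∑ j ∈ range (d+1), -(∑ w : {v : V // v ∉ Set.range p},
                    bzf G p z'.1 j * (xzf G p w.1 j * y w)) := by
                  refine Finset.sum_congr rfl fun j hj => ?_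
                  rw [mem_range] at hj
                  rw [hwfp j (by omega), mul_neg, Finset.mul_sum]
              _ = -(∑ j ∈ range (d+1), ∑ w : {v : V // v ∉ Set.range p},
                    bzf G p z'.1 j * (xzf G p w.1 j * y w)) := by
                  rw [Finset.sum_neg_distrib]
              _ = -(∑ w : {v : V // v ∉ Set.range p}, ∑ j ∈ range (d+1),
                    bzf G p z'.1 j * (xzf G p w.1 j * y w)) := by
                  rw [Finset.sum_comm]
              _ = - ∑ w : {v : V // v ∉ Set.range p},
                    (∑ j ∈ range (d+1), bzf G p z'.1 j * xzf G p w.1 j) * y w := by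
                  congr 1
                  refine Finset.sum_congr rfl fun w _ => ?_
                  rw [Finset.sum_mul]
                  exact Finset.sum_congr rfl fun j _ => by ring
          rw [h1]
          have h2 := congrFun hy' z'
          rw [SMat_mulVec, Pi.zero_apply] at h2
          have h3 : ∑ w : {v : V // v ∉ Set.range p}, ((if G.Adj z'.1 w.1 then (1:ℝ) else 0)
                - ∑ i ∈ range (d+1), bzf G p z'.1 i * xzf G p w.1 i) * y w
              = ∑ w : {v : V // v ∉ Set.range p}, (if G.Adj z'.1 w.1 then (1:ℝ) else 0) * y w
                - ∑ w : {v : V // v ∉ Set.range p},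
                    (∑ i ∈ range (d+1), bzf G p z'.1 i * xzf G p w.1 i) * y w := by
            rw [← Finset.sum_sub_distrib]
            exact Finset.sum_congr rfl fun w _ => by ring
          rw [h3] at h2
          have h4 : ∑ w : {v : V // v ∉ Set.range p},
              (if G.Adj z'.1 w.1 then (1:ℝ) else 0) * wf w.1
            = ∑ w : {v : V // v ∉ Set.range p}, (if G.Adj z'.1 w.1 then (1:ℝ) else 0) * y w :=
            Finset.sum_congr rfl fun w _ => by rw [hwfq]
          rw [h4]
          linarith [h2]
      refine ⟨⟨wf, hmem⟩, ?_⟩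
      funext z'
      rw [PsiMap_apply]
      exact hwfq z'
  -- dimension count
  have h1 := LinearMap.finrank_range_add_finrank_ker (PsiMap G p)
  rw [hrangePsi, hdimker, hq] at h1
  have h2 := LinearMap.finrank_range_add_finrank_ker (SMat G p).mulVecLin
  rw [Module.finrank_pi] at h2
  omega

/-- The set of path indices adjacent to `z`. -/
def Fznat (G : SimpleGraph V) [DecidableRel G.Adj] (p : Fin (d+1) → V) (z : V) : Finset ℕ :=
  (range (d+1)).filter (fun m => G.Adj z (pn p m))

lemma card_triple_le (m : ℕ) : ({m, m+1, m+2} : Finset ℕ).card ≤ 3 := by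
  have h1 := Finset.card_insert_le m ({m+1, m+2} : Finset ℕ)
  have h2 := Finset.card_insert_le (m+1) ({m+2} : Finset ℕ)
  have h3 : ({m+2} : Finset ℕ).card = 1 := Finset.card_singleton _
  omega

lemma mem_Fznat {z : V} {m : ℕ} : m ∈ Fznat G p z ↔ m ≤ d ∧ G.Adj z (pn p m) := by
  unfold Fznat
  rw [Finset.mem_filter, mem_range]
  constructor
  · rintro ⟨h1, h2⟩; exact ⟨by omega, h2⟩
  · rintro ⟨h1, h2⟩; exact ⟨by omega, h2⟩

lemma bzf_eq (z : V) (m : ℕ) : bzf G p z m = if m ∈ Fznat G p z then 1 else 0 := by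
  unfold bzf
  by_cases h : m ∈ Fznat G p z
  · rw [if_pos (mem_Fznat.mp h), if_pos h]
  · rw [if_neg (fun hc => h (mem_Fznat.mpr hc)), if_neg h]

lemma sum_bzf (z : V) (g : ℕ → ℝ) :
    ∑ i ∈ range (d+1), bzf G p z i * g i = ∑ i ∈ Fznat G p z, g i := by
  unfold Fznat
  rw [Finset.sum_filter]
  refine Finset.sum_congr rfl fun i hi => ?_
  rw [mem_range] at hi
  unfold bzf
  by_cases h : G.Adj z (pn p i)
  · rw [if_pos ⟨by omega, h⟩, if_pos h, one_mul]
  · rw [if_neg (fun hc => h hc.2), if_neg h, zero_mul]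

lemma sum_uu_bzf (z : V) :
    ∑ i ∈ range (d+1), uu i * bzf G p z i = ∑ i ∈ Fznat G p z, uu i := by
  rw [← sum_bzf z uu]
  exact Finset.sum_congr rfl fun i _ => by ring

include hG hadj hdist' in
lemma Fz_window (z : V) {m1 m2 : ℕ} (h1 : m1 ∈ Fznat G p z) (h2 : m2 ∈ Fznat G p z)
    (hle : m1 ≤ m2) : m2 ≤ m1 + 2 := by
  rw [mem_Fznat] at h1 h2
  exact pn_key hadj hG hdist' m1 m2 hle h2.1 z h1.2 h2.2

include hG hadj hdist' in
lemma Fz_card_le3 (z : V) : (Fznat G p z).card ≤ 3 := by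
  rcases (Fznat G p z).eq_empty_or_nonempty with h | hne
  · rw [h]; simp
  · have hmem := Finset.min'_mem _ hne
    set m := (Fznat G p z).min' hne with hm
    have hsub : Fznat G p z ⊆ {m, m+1, m+2} := by
      intro x hx
      have hxm := Finset.min'_le _ x hx
      have hwin := Fz_window hG hadj hdist' z hmem hx hxm
      simp only [Finset.mem_insert, Finset.mem_singleton]
      omega
    calc (Fznat G p z).card ≤ ({m, m+1, m+2} : Finset ℕ).card := Finset.card_le_card hsub
      _ ≤ 3 := card_triple_le m

include hG hadj hdist' in
lemma Fz_struct3 (z : V) (h3 : (Fznat G p z).card = 3) :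
    ∃ m, m + 2 ≤ d ∧ Fznat G p z = {m, m+1, m+2} := by
  have hne : (Fznat G p z).Nonempty := Finset.card_pos.mp (by omega)
  have hmem := Finset.min'_mem _ hne
  set m := (Fznat G p z).min' hne with hm
  have hsub : Fznat G p z ⊆ {m, m+1, m+2} := by
    intro x hx
    have hxm := Finset.min'_le _ x hx
    have hwin := Fz_window hG hadj hdist' z hmem hx hxm
    simp only [Finset.mem_insert, Finset.mem_singleton]
    omega
  have hcard3 : ({m, m+1, m+2} : Finset ℕ).card ≤ 3 := card_triple_le m
  have heq := Finset.eq_of_subset_of_card_le hsub (by omega)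
  refine ⟨m, ?_, heq⟩
  have : m + 2 ∈ Fznat G p z := by
    rw [heq]
    simp
  exact (mem_Fznat.mp this).1

lemma Fz3_even (z : V) (m : ℕ) (hF : Fznat G p z = {m, m+1, m+2})
    (horth : ∑ i ∈ range (d+1), uu i * bzf G p z i = 0) : Even m := by
  have hsum : ∑ i ∈ Fznat G p z, uu i = 0 := by rw [← sum_uu_bzf]; exact horth
  rw [hF, Finset.sum_insert (by simp), Finset.sum_insert (by simp),
    Finset.sum_singleton, uu_succ_succ] at hsum
  have h1 : uu (m+1) = 0 := by linarith
  by_contra hodd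
  exact (uu_ne_zero_iff.mpr (Nat.even_add_one.mpr hodd)) h1

include hG hadj hdist' in
lemma SMat_diag_ne3 (z : {v : V // v ∉ Set.range p})
    (horth : ∑ i ∈ range (d+1), uu i * bzf G p z.1 i = 0)
    (h3 : (Fznat G p z.1).card ≠ 3) : SMat G p z z = 0 := by
  rw [SMat_apply, if_neg (G.irrefl), sum_bzf]
  have hle3 := Fz_card_le3 hG hadj hdist' z.1
  have hsum : ∑ i ∈ Fznat G p z.1, uu i = 0 := by rw [← sum_uu_bzf]; exact horth
  interval_cases hc : (Fznat G p z.1).card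
  · rw [Finset.card_eq_zero.mp hc, Finset.sum_empty]
    ring
  · obtain ⟨m, hF⟩ := Finset.card_eq_one.mp hc
    rw [hF, Finset.sum_singleton]
    have hodd : ¬ Even m := by
      intro he
      apply uu_ne_zero_iff.mpr he
      rw [hF, Finset.sum_singleton] at hsum
      exact hsum
    obtain ⟨t, ht⟩ : ∃ t, m = 2*t+1 := by
      rcases Nat.even_or_odd m with h | h
      · exact absurd h hodd
      · obtain ⟨t, ht⟩ := h; exact ⟨t, by omega⟩
    have : xzf G p z.1 m = 0 := by
      unfold xzf
      rw [ht]
      apply xr_odd_supp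
      intro k hk
      rw [bzf_eq, if_neg]
      rw [hF, Finset.mem_singleton]
      intro hkm
      rw [hkm, ht] at hk
      simp [Nat.even_add_one, parity_simps] at hk
    rw [this]
    ring
  · obtain ⟨a, b, hab, hF⟩ := Finset.card_eq_two.mp hc
    -- order them
    have key : ∀ a b : ℕ, a < b → Fznat G p z.1 = {a, b} →
        (0:ℝ) - ∑ i ∈ Fznat G p z.1, xzf G p z.1 i = 0 := by
      intro a b hab hF
      have ha : a ∈ Fznat G p z.1 := by rw [hF]; simp
      have hb : b ∈ Fznat G p z.1 := by rw [hF]; simp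
      have hwin := Fz_window hG hadj hdist' z.1 ha hb (by omega)
      have hsum' : uu a + uu b = 0 := by
        rw [hF, Finset.sum_insert (by simp; omega), Finset.sum_singleton] at hsum
        exact hsum
      have hb2 : b = a + 2 := by
        rcases (by omega : b = a + 1 ∨ b = a + 2) with h | h
        · exfalso
          rcases Nat.even_or_odd a with he | ho
          · have h1 : uu (a+1) = 0 := uu_odd (by simp [Nat.even_add_one, parity_simps, he])
            rw [h, h1] at hsum'
            exact (uu_ne_zero_iff.mpr he) (by linarith)
          · have h1 : uu a = 0 := uu_odd (Nat.not_even_iff_odd.mpr ho)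
            rw [h, h1] at hsum'
            exact (uu_ne_zero_iff.mpr (Nat.even_add_one.mpr (Nat.not_even_iff_odd.mpr ho)))
              (by linarith)
        · exact h
      rw [hF, Finset.sum_insert (by simp; omega), Finset.sum_singleton, hb2]
      have hrec : xzf G p z.1 a + xzf G p z.1 (a+2) = bzf G p z.1 (a+1) := xr_rec _ a
      have hbz : bzf G p z.1 (a+1) = 0 := by
        rw [bzf_eq, if_neg]
        rw [hF, hb2]
        simp
      rw [hbz] at hrec
      linarith
    rcases Nat.lt_or_ge a b with h | h
    · exact key a b h hF
    · exact key b a (by omega) (by rw [hF]; exact Finset.pair_comm a b)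
  · exact absurd rfl h3

lemma bzf_triple (z : V) (m : ℕ) (hF : Fznat G p z = {m, m+1, m+2}) :
    ∀ k, bzf G p z k = (if k = m ∨ k = m+1 ∨ k = m+2 then (1:ℝ) else 0) := by
  intro k
  rw [bzf_eq, hF]
  congr 1
  simp [Finset.mem_insert, Finset.mem_singleton]

lemma SMat_cross (z w : {v : V // v ∉ Set.range p}) (mz mw : ℕ)
    (hez : Even mz) (hew : Even mw)
    (hFz : Fznat G p z.1 = {mz, mz+1, mz+2}) (hFw : Fznat G p w.1 = {mw, mw+1, mw+2}) :
    SMat G p z w = (if G.Adj z.1 w.1 then 1 else 0) - 2 * (if mz = mw then 1 else 0) := by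
  rw [SMat_apply, sum_bzf, hFz, Finset.sum_insert (by simp),
    Finset.sum_insert (by simp), Finset.sum_singleton]
  have h1 : xzf G p w.1 mz + xzf G p w.1 (mz+2) = bzf G p w.1 (mz+1) := xr_rec _ mz
  have e1 := Nat.even_iff.mp hez
  have e2 := Nat.even_iff.mp hew
  have h2 : xzf G p w.1 (mz+1) = (if mz = mw then 1 else 0) := by
    unfold xzf
    rw [xr_congr (bzf_triple w.1 mw hFw) (mz+1), xr_triple mw mz hew hez]
  have h3 : bzf G p w.1 (mz+1) = (if mz = mw then 1 else 0) := by
    rw [bzf_triple w.1 mw hFw (mz+1)]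
    rcases eq_or_ne mz mw with h | h
    · rw [if_pos (by omega), if_pos h]
    · rw [if_neg (by omega), if_neg h]
  rw [h3] at h1
  linarith [h1, h2]

lemma SMat_symm (hd : Even d) (z w : {v : V // v ∉ Set.range p})
    (hoz : ∑ i ∈ range (d+1), uu i * bzf G p z.1 i = 0)
    (how : ∑ i ∈ range (d+1), uu i * bzf G p w.1 i = 0) :
    SMat G p z w = SMat G p w z := by
  rw [SMat_apply, SMat_apply]
  congr 1
  · exact if_congr (G.adj_comm z.1 w.1) rfl rfl
  · calc ∑ i ∈ range (d+1), bzf G p z.1 i * xzf G p w.1 i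
        = ∑ i ∈ range (d+1), xzf G p w.1 i * mrow d (xzf G p z.1) i := by
          refine Finset.sum_congr rfl fun i hi => ?_
          rw [mem_range] at hi
          rw [xsol_z hd z.1 hoz i (by omega)]
          ring
      _ = ∑ i ∈ range (d+1), xzf G p z.1 i * mrow d (xzf G p w.1) i := mrow_symm _ _
      _ = ∑ i ∈ range (d+1), bzf G p w.1 i * xzf G p z.1 i := by
          refine Finset.sum_congr rfl fun i hi => ?_
          rw [mem_range] at hi
          rw [xsol_z hd w.1 how i (by omega)]
          ring

lemma col_mem (z : {v : V // v ∉ Set.range p}) :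
    (fun a => SMat G p a z) ∈ LinearMap.range (SMat G p).mulVecLin := by
  refine ⟨Pi.single z 1, ?_⟩
  rw [Matrix.mulVecLin_apply, Matrix.mulVec_single]
  funext a
  simp

include hG hadj hdist' in
lemma exists_triple (hd : Even d)
    (hq : finrank ℝ (LinearMap.ker (adjMat G).mulVecLin)
      = Fintype.card {v : V // v ∉ Set.range p}) :
    ∃ z : {v : V // v ∉ Set.range p}, (Fznat G p z.1).card = 3 := by
  have hbad := bad_lemma hG hadj hdist' hd hq
  have hrank := rankS_one hG hadj hdist' hd hq
  by_contra hcon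
  push_neg at hcon
  have hdiag : ∀ z, SMat G p z z = 0 := fun z =>
    SMat_diag_ne3 hG hadj hdist' z (hbad z) (hcon z)
  have hSne : SMat G p ≠ 0 := by
    intro h0
    rw [h0] at hrank
    rw [Matrix.mulVecLin_zero, LinearMap.range_zero, finrank_bot] at hrank
    exact absurd hrank (by norm_num)
  obtain ⟨z, w, hzw⟩ : ∃ z w, SMat G p z w ≠ 0 := by
    by_contra h
    push_neg at h
    exact hSne (Matrix.ext fun z w => by rw [h z w, Matrix.zero_apply])
  have hzw' : z ≠ w := by
    intro h
    subst h
    exact hzw (hdiag z)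
  have hWZ : SMat G p w z ≠ 0 := by
    rw [SMat_symm hd w z (hbad w) (hbad z)]
    exact hzw
  have hli : LinearIndependent ℝ ![(fun a => SMat G p a z), (fun a => SMat G p a w)] := by
    rw [LinearIndependent.pair_iff]
    intro s t hst
    have h1 := congrFun hst w
    have h2 := congrFun hst z
    simp only [Pi.add_apply, Pi.smul_apply, smul_eq_mul, Pi.zero_apply] at h1 h2
    rw [hdiag w] at h1
    rw [hdiag z] at h2
    constructor
    · rcases mul_eq_zero.mp (show s * SMat G p w z = 0 by linarith) with h | h
      · exact h
      · exact absurd h hWZ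
    · rcases mul_eq_zero.mp (show t * SMat G p z w = 0 by linarith) with h | h
      · exact h
      · exact absurd h hzw
  have hspan : Submodule.span ℝ (Set.range ![(fun a => SMat G p a z), (fun a => SMat G p a w)])
      ≤ LinearMap.range (SMat G p).mulVecLin := by
    rw [Submodule.span_le]
    rintro x ⟨i, rfl⟩
    fin_cases i
    · exact col_mem z
    · exact col_mem w
  have h2le : (2:ℕ) ≤ finrank ℝ (LinearMap.range (SMat G p).mulVecLin) := by
    have hcard := finrank_span_eq_card hli
    have hmono := Submodule.finrank_mono hspan
    rw [hcard] at hmono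
    simpa using hmono
  omega

include hG hadj hdist' in
lemma unique_triple (hd : Even d)
    (hreduced : ∀ a b : V, G.neighborSet a = G.neighborSet b → a = b)
    (hq : finrank ℝ (LinearMap.ker (adjMat G).mulVecLin)
      = Fintype.card {v : V // v ∉ Set.range p})
    (z w : {v : V // v ∉ Set.range p})
    (hz3 : (Fznat G p z.1).card = 3) (hw3 : (Fznat G p w.1).card = 3) : z = w := by
  by_contra hne
  have hbad := bad_lemma hG hadj hdist' hd hq
  have hrank := rankS_one hG hadj hdist' hd hq
  obtain ⟨mz, hz2, hFz⟩ := Fz_struct3 hG hadj hdist' z.1 hz3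
  obtain ⟨mw, hw2, hFw⟩ := Fz_struct3 hG hadj hdist' w.1 hw3
  have hez : Even mz := Fz3_even z.1 mz hFz (hbad z)
  have hew : Even mw := Fz3_even w.1 mw hFw (hbad w)
  have hdz : SMat G p z z = -2 := by
    rw [SMat_cross z z mz mz hez hez hFz hFz, if_neg (G.irrefl), if_pos rfl]
    ring
  have hdw : SMat G p w w = -2 := by
    rw [SMat_cross w w mw mw hew hew hFw hFw, if_neg (G.irrefl), if_pos rfl]
    ring
  have hcz0 : (fun a => SMat G p a z) ≠ 0 := by
    intro h
    have := congrFun h z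
    rw [hdz, Pi.zero_apply] at this
    norm_num at this
  have hspan : Submodule.span ℝ {(fun a => SMat G p a z)}
      = LinearMap.range (SMat G p).mulVecLin := by
    apply Submodule.eq_of_le_of_finrank_le
    · rw [Submodule.span_le, Set.singleton_subset_iff]
      exact col_mem z
    · rw [hrank, finrank_span_singleton hcz0]
  have hcw_mem : (fun a => SMat G p a w) ∈ Submodule.span ℝ {(fun a => SMat G p a z)} := by
    rw [hspan]
    exact col_mem w
  obtain ⟨ta, hta⟩ := Submodule.mem_span_singleton.mp hcw_mem
  have h1 := congrFun hta w
  have h2 := congrFun hta z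
  simp only [Pi.smul_apply, smul_eq_mul] at h1 h2
  rw [hdw] at h1
  rw [hdz] at h2
  -- h1 : ta * SMat w z = -2 ; h2 : ta * -2 = SMat z w
  have hsym := SMat_symm hd z w (hbad z) (hbad w)
  rw [← hsym] at h1
  have hS : SMat G p z w = -2 * ta := by linarith [h2]
  have h3 : ta * (-2 * ta) = -2 := by rw [← hS]; exact h1
  have hta2 : ta * ta = 1 := by linear_combination (-1/2 : ℝ) * h3
  have hcross := SMat_cross z w mz mw hez hew hFz hFw
  have hta1 : ta = 1 := by
    rcases mul_self_eq_one_iff.mp hta2 with h | h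
    · exact h
    · exfalso
      have hS2 : SMat G p z w = 2 := by rw [hS, h]; ring
      rw [hS2] at hcross
      split_ifs at hcross <;> norm_num at hcross
  have hszw : SMat G p z w = -2 := by rw [hS, hta1]; ring
  have hkey : ¬ G.Adj z.1 w.1 ∧ mz = mw := by
    rw [hszw] at hcross
    split_ifs at hcross with h1' h2' h3'
    · norm_num at hcross
    · norm_num at hcross
    · exact ⟨h1', h3'⟩
    · norm_num at hcross
  obtain ⟨hnadj, hmzw⟩ := hkey
  have hceq : (fun a => SMat G p a z) = (fun a => SMat G p a w) := by
    rw [← hta, hta1, one_smul]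
  have hFeq : Fznat G p z.1 = Fznat G p w.1 := by rw [hFz, hFw, hmzw]
  have hbeq : bzf G p z.1 = bzf G p w.1 := funext fun k => by rw [bzf_eq, bzf_eq, hFeq]
  have hxeq : xzf G p z.1 = xzf G p w.1 := by unfold xzf; rw [hbeq]
  have hCeq : ∀ a : {v : V // v ∉ Set.range p},
      (if G.Adj a.1 z.1 then (1:ℝ) else 0) = (if G.Adj a.1 w.1 then 1 else 0) := by
    intro a
    have h := congrFun hceq a
    rw [SMat_apply, SMat_apply, hxeq] at h
    linarith [h]
  apply hne
  apply Subtype.ext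
  apply hreduced
  ext v
  simp only [SimpleGraph.mem_neighborSet]
  by_cases hv : v ∈ Set.range p
  · obtain ⟨i, rfl⟩ := hv
    rw [show p i = pn p (i:ℕ) from (pn_eq i).symm]
    constructor
    · intro h
      have hm : (i:ℕ) ∈ Fznat G p z.1 := mem_Fznat.mpr ⟨by omega, h⟩
      rw [hFeq] at hm
      exact (mem_Fznat.mp hm).2
    · intro h
      have hm : (i:ℕ) ∈ Fznat G p w.1 := mem_Fznat.mpr ⟨by omega, h⟩
      rw [← hFeq] at hm
      exact (mem_Fznat.mp hm).2
  · have h := hCeq ⟨v, hv⟩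
    constructor
    · intro hA
      by_contra hB
      rw [if_pos (G.adj_comm z.1 v |>.mp hA), if_neg (fun hc => hB ((G.adj_comm v w.1).mp hc))] at h
      norm_num at h
    · intro hA
      by_contra hB
      rw [if_neg (fun hc => hB ((G.adj_comm v z.1).mp hc)),
        if_pos (G.adj_comm w.1 v |>.mp hA)] at h
      norm_num at h

lemma card_transfer (z : V) :
    (Finset.univ.filter fun i : Fin (d+1) => G.Adj z (p i)).card = (Fznat G p z).card := by
  apply Finset.card_bij (fun (i : Fin (d+1)) _ => (i : ℕ))
  · intro i hi
    rw [Finset.mem_filter] at hi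
    refine mem_Fznat.mpr ⟨by omega, ?_⟩
    rw [pn_eq]
    exact hi.2
  · intro i _ j _ h
    exact Fin.ext h
  · intro m hm
    rw [mem_Fznat] at hm
    refine ⟨⟨m, by omega⟩, ?_, rfl⟩
    rw [Finset.mem_filter]
    refine ⟨Finset.mem_univ _, ?_⟩
    have := hm.2
    rwa [pn_mk m hm.1] at this

end Main

/-- Let `G` be connected, twin-free, with even diameter `d`, let `p 0 ∼ ⋯ ∼ p d` be
a diameter path, and suppose `η(G) = n - d - 1`. Then there is exactly one vertex
of `G` outside the path having exactly three neighbours on the path. -/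
theorem stmt17 {V : Type} [Fintype V] (G : SimpleGraph V) [DecidableRel G.Adj]
    (hG : G.Connected) (heven : Even G.diam)
    (hreduced : ∀ a b : V, G.neighborSet a = G.neighborSet b → a = b)
    (p : Fin (G.diam + 1) → V)
    (hadj : ∀ i : Fin G.diam, G.Adj (p i.castSucc) (p i.succ))
    (hdist : G.dist (p 0) (p (Fin.last G.diam)) = G.diam)
    (hnull : nullity G = Fintype.card V - G.diam - 1) :
    ∃! z : V, z ∉ Set.range p ∧
      (Finset.univ.filter fun i : Fin (G.diam + 1) => G.Adj z (p i)).card = 3 := by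
  classical
  have hinj : Function.Injective p := p_inj hadj hG hdist
  have hcardV := card_split hinj
  have hq : Module.finrank ℝ (LinearMap.ker (adjMat G).mulVecLin)
      = Fintype.card {v : V // v ∉ Set.range p} := by
    have hn : Module.finrank ℝ (LinearMap.ker (adjMat G).mulVecLin)
        = Fintype.card V - G.diam - 1 := hnull
    omega
  obtain ⟨z, hz3⟩ := exists_triple hG hadj hdist heven hq
  refine ⟨z.1, ⟨z.2, ?_⟩, ?_⟩
  · rw [card_transfer]
    exact hz3
  · rintro y ⟨hy1, hy2⟩
    rw [card_transfer] at hy2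
    have h := unique_triple hG hadj hdist heven hreduced hq ⟨y, hy1⟩ z hy2 hz3
    exact congrArg Subtype.val h
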